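/- For any finite tree T there is a bijection between E_fix(T), the set of legal subsets of E^2(T), and the set of fixed points c of the minority process on T with c(v*)=0 for a fixed distinguished node v*. The bijection sends a fixed point c to its set of monochromatic edges. -/

import Mathlib

open SimpleGraph Finset
open scoped Classical

variable {V : Type*}

/-- Number of neighbors of `v` with the same color as `v`. -/
noncomputable def sameCount (G : SimpleGraph V) [Fintype V] (c : V → Bool) (v : V) : ℕ :=
  ((G.neighborFinset v).filter fun u => c u = c v).card

/-- Number of neighbors of `v` with the opposite color. -/
noncomputable def diffCount (G : SimpleGraph V) [Fintype V] (c : V → Bool) (v : V) : ℕ :=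
  ((G.neighborFinset v).filter fun u => c u ≠ c v).card

/-- One round of the minority process. -/
noncomputable def minStep (G : SimpleGraph V) [Fintype V] (c : V → Bool) : V → Bool :=
  fun v => if sameCount G c v ≤ diffCount G c v then c v else !c v

/-- One round of the majority process. -/
noncomputable def majStep (G : SimpleGraph V) [Fintype V] (c : V → Bool) : V → Bool :=
  fun v => if diffCount G c v ≤ sameCount G c v then c v else !c v

/-- Number of edges of `F` incident to `v`. -/
noncomputable def incCount (F : Finset (Sym2 V)) (v : V) : ℕ :=
  (F.filter fun e => v ∈ e).card

/-- The monochromatic edges of a coloring. -/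
noncomputable def monoEdges (G : SimpleGraph V) [Fintype V] (c : V → Bool) : Finset (Sym2 V) :=
  G.edgeFinset.filter fun e => ∀ x ∈ e, ∀ y ∈ e, c x = c y

/-- The multichromatic edges of a coloring. -/
noncomputable def multiEdges (G : SimpleGraph V) [Fintype V] (c : V → Bool) : Finset (Sym2 V) :=
  G.edgeFinset.filter fun e => ∃ x ∈ e, ∃ y ∈ e, c x ≠ c y

/-- Edges of `G` both of whose endpoints have degree at least 2. -/
noncomputable def Etwo (G : SimpleGraph V) [Fintype V] : Finset (Sym2 V) :=
  G.edgeFinset.filter fun e => ∀ x ∈ e, 2 ≤ G.degree x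

/-- `F` is legal: `F ⊆ E²(T)` and `F_v ≤ deg(v)/2` for every node. -/
def legalFix (G : SimpleGraph V) [Fintype V] (F : Finset (Sym2 V)) : Prop :=
  F ⊆ Etwo G ∧ ∀ v, 2 * incCount F v ≤ G.degree v

section Aux

variable {G : SimpleGraph V}

lemma sameCount_add_diffCount [Fintype V] (c : V → Bool) (v : V) :
    sameCount G c v + diffCount G c v = G.degree v := by
  rw [sameCount, diffCount, ← SimpleGraph.card_neighborFinset_eq_degree]
  exact Finset.card_filter_add_card_filter_not _

lemma minStep_eq_iff [Fintype V] (c : V → Bool) :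
    minStep G c = c ↔ ∀ v, sameCount G c v ≤ diffCount G c v := by
  constructor
  · intro h v
    by_contra hv
    have := congrFun h v
    rw [minStep, if_neg hv] at this
    simp at this
  · intro h
    funext v
    rw [minStep, if_pos (h v)]

lemma mono_pair (c : V → Bool) (x y : V) :
    (∀ a ∈ s(x, y), ∀ b ∈ s(x, y), c a = c b) ↔ c x = c y := by
  constructor
  · intro h
    exact h x (by simp) y (by simp)
  · intro h a ha b hb
    rw [Sym2.mem_iff] at ha hb
    rcases ha with rfl | rfl <;> rcases hb with rfl | rfl <;>
      first | rfl | exact h | exact h.symm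

lemma mem_monoEdges [Fintype V] {c : V → Bool} {x y : V} :
    s(x, y) ∈ monoEdges G c ↔ G.Adj x y ∧ c x = c y := by
  rw [monoEdges, Finset.mem_filter, SimpleGraph.mem_edgeFinset, SimpleGraph.mem_edgeSet,
    mono_pair]

lemma sameCount_eq_incCount [Fintype V] (c : V → Bool) (v : V) :
    sameCount G c v = incCount (monoEdges G c) v := by
  rw [sameCount, incCount]
  apply Finset.card_bij (fun u _ => s(u, v))
  · intro u hu
    rw [Finset.mem_filter, SimpleGraph.mem_neighborFinset] at hu
    rw [Finset.mem_filter, mem_monoEdges]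
    exact ⟨⟨hu.1.symm, hu.2⟩, by simp⟩
  · intro a ha b hb hab
    exact Sym2.congr_left.mp hab
  · intro e he
    rw [Finset.mem_filter] at he
    obtain ⟨w, rfl⟩ := Sym2.mem_iff_exists.mp he.2
    rw [mem_monoEdges] at he
    refine ⟨w, ?_, Sym2.eq_swap⟩
    rw [Finset.mem_filter, SimpleGraph.mem_neighborFinset]
    exact ⟨he.1.1, he.1.2.symm⟩

lemma monoEdges_subset_edgeFinset [Fintype V] (c : V → Bool) :
    monoEdges G c ⊆ G.edgeFinset :=
  Finset.filter_subset _ _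

lemma fixed_step [Fintype V] {c c' : V → Bool} (hm : monoEdges G c = monoEdges G c')
    {a b : V} (hab : G.Adj a b) (ha : c a = c' a) : c b = c' b := by
  have h1 : (G.Adj a b ∧ c a = c b) ↔ (G.Adj a b ∧ c' a = c' b) := by
    rw [← mem_monoEdges, ← mem_monoEdges, hm]
  have h2 : (c a = c b) ↔ (c' a = c' b) := by
    constructor
    · intro h; exact (h1.mp ⟨hab, h⟩).2
    · intro h; exact (h1.mpr ⟨hab, h⟩).2
  rw [ha] at h2
  revert h2
  cases c' a <;> cases c b <;> cases c' b <;> simp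

lemma fixed_walk [Fintype V] {c c' : V → Bool} (hm : monoEdges G c = monoEdges G c')
    {u v : V} (p : G.Walk u v) (h : c u = c' u) : c v = c' v := by
  induction p with
  | nil => exact h
  | cons hadj q ih => exact ih (fixed_step hm hadj h)

/-- The unique path between two vertices in a tree. -/
noncomputable def thePath (hT : G.IsTree) (u v : V) : G.Walk u v :=
  (hT.existsUnique_path u v).choose

lemma thePath_isPath (hT : G.IsTree) (u v : V) : (thePath hT u v).IsPath :=
  (hT.existsUnique_path u v).choose_spec.1

lemma thePath_unique (hT : G.IsTree) {u v : V} (p : G.Walk u v) (hp : p.IsPath) :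
    p = thePath hT u v :=
  (hT.existsUnique_path u v).choose_spec.2 p hp

lemma thePath_key (hT : G.IsTree) (vstar : V) {u v : V} (h : G.Adj u v) :
    thePath hT vstar v = (thePath hT vstar u).concat h ∨
      thePath hT vstar u = (thePath hT vstar v).concat h.symm := by
  set p := thePath hT vstar u with hpdef
  have hp : p.IsPath := thePath_isPath hT vstar u
  by_cases hv : v ∈ p.support
  · right
    have hq : (p.takeUntil v hv).IsPath := hp.takeUntil hv
    have hr : (p.dropUntil v hv).IsPath := hp.dropUntil hv
    have hsingle : (Walk.cons h.symm Walk.nil : G.Walk v u).IsPath := by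
      simp [Walk.cons_isPath_iff, h.ne']
    have hru : p.dropUntil v hv = Walk.cons h.symm Walk.nil := by
      rw [thePath_unique hT _ hr, thePath_unique hT _ hsingle]
    have htake : p.takeUntil v hv = thePath hT vstar v := thePath_unique hT _ hq
    calc p = (p.takeUntil v hv).append (p.dropUntil v hv) := (p.take_spec hv).symm
      _ = (thePath hT vstar v).concat h.symm := by
          rw [htake, hru, Walk.concat_eq_append]
  · left
    have hcat : (p.concat h).IsPath := by
      rw [Walk.isPath_def, Walk.support_concat]
      have := hp.support_nodup
      simp [List.concat_eq_append, List.nodup_append, this, hv]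
      rintro a ha rfl
      exact hv ha
    exact (thePath_unique hT _ hcat).symm

/-- The coloring associated to an edge set `F`: parity of the number of
non-`F` edges along the unique path from `vstar`. -/
noncomputable def treeColor (hT : G.IsTree) (vstar : V) (F : Finset (Sym2 V)) (v : V) : Bool :=
  decide ((thePath hT vstar v).edges.countP (fun e => decide (e ∉ F)) % 2 = 1)

lemma treeColor_vstar (hT : G.IsTree) (vstar : V) (F : Finset (Sym2 V)) :
    treeColor hT vstar F vstar = false := by
  have : (Walk.nil : G.Walk vstar vstar) = thePath hT vstar vstar :=
    thePath_unique hT _ Walk.IsPath.nil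
  rw [treeColor, ← this]
  simp

lemma treeColor_concat (hT : G.IsTree) (vstar : V) (F : Finset (Sym2 V)) {u v : V}
    (h : G.Adj u v) (hcat : thePath hT vstar v = (thePath hT vstar u).concat h) :
    (treeColor hT vstar F u = treeColor hT vstar F v) ↔ s(u, v) ∈ F := by
  rw [treeColor, treeColor, hcat, Walk.edges_concat]
  rw [List.concat_eq_append, List.countP_append]
  set n := (thePath hT vstar u).edges.countP (fun e => decide (e ∉ F)) with hn
  by_cases hF : s(u, v) ∈ F
  · simp only [List.countP_cons, List.countP_nil, hF, decide_eq_true_eq]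
    simp [hF]
  · have hone : List.countP (fun e => decide (e ∉ F)) [s(u, v)] = 1 := by
      simp [hF]
    rw [hone]
    rcases Nat.mod_two_eq_zero_or_one n with h0 | h0 <;>
      simp [Nat.add_mod, h0, hF]

lemma treeColor_adj (hT : G.IsTree) (vstar : V) (F : Finset (Sym2 V)) {u v : V}
    (h : G.Adj u v) :
    (treeColor hT vstar F u = treeColor hT vstar F v) ↔ s(u, v) ∈ F := by
  rcases thePath_key hT vstar h with hcat | hcat
  · exact treeColor_concat hT vstar F h hcat
  · rw [eq_comm, Sym2.eq_swap]
    exact treeColor_concat hT vstar F h.symm hcat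

lemma monoEdges_treeColor [Fintype V] (hT : G.IsTree) (vstar : V) {F : Finset (Sym2 V)}
    (hF : F ⊆ G.edgeFinset) :
    monoEdges G (treeColor hT vstar F) = F := by
  ext e
  refine Sym2.ind (fun x y => ?_) e
  rw [mem_monoEdges]
  constructor
  · rintro ⟨hadj, hc⟩
    exact (treeColor_adj hT vstar F hadj).mp hc
  · intro hmem
    have hadj : G.Adj x y := by
      have := hF hmem
      rwa [SimpleGraph.mem_edgeFinset, SimpleGraph.mem_edgeSet] at this
    exact ⟨hadj, (treeColor_adj hT vstar F hadj).mpr hmem⟩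

end Aux

theorem stmt3 [Fintype V] (G : SimpleGraph V) (hT : G.IsTree) (vstar : V) :
    Set.BijOn (fun c => monoEdges G c)
      {c : V → Bool | minStep G c = c ∧ c vstar = false}
      {F | legalFix G F} := by
  refine ⟨?_, ?_, ?_⟩
  · -- MapsTo
    rintro c ⟨hfix, -⟩
    have hle := (minStep_eq_iff c).mp hfix
    constructor
    · -- monoEdges ⊆ Etwo
      intro e he
      rw [Etwo, Finset.mem_filter]
      refine ⟨monoEdges_subset_edgeFinset c he, fun x hx => ?_⟩
      have h1 : 1 ≤ incCount (monoEdges G c) x := by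
        rw [incCount, Nat.one_le_iff_ne_zero, ← Nat.pos_iff_ne_zero, Finset.card_pos]
        exact ⟨e, Finset.mem_filter.mpr ⟨he, hx⟩⟩
      have h2 := sameCount_eq_incCount (G := G) c x
      have h3 := sameCount_add_diffCount (G := G) c x
      have h4 := hle x
      omega
    · intro v
      show 2 * incCount (monoEdges G c) v ≤ G.degree v
      have h2 := sameCount_eq_incCount (G := G) c v
      have h3 := sameCount_add_diffCount (G := G) c v
      have h4 := hle v
      omega
  · -- InjOn
    rintro c ⟨-, hc0⟩ c' ⟨-, hc0'⟩ hmono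
    simp only at hmono
    funext v
    obtain ⟨p⟩ := hT.isConnected.preconnected vstar v
    exact fixed_walk hmono p (by rw [hc0, hc0'])
  · -- SurjOn
    rintro F hF
    obtain ⟨hFE, hdeg⟩ := hF
    have hFedge : F ⊆ G.edgeFinset := fun e he => (Finset.mem_filter.mp (hFE he)).1
    refine ⟨treeColor hT vstar F, ⟨?_, treeColor_vstar hT vstar F⟩,
      monoEdges_treeColor hT vstar hFedge⟩
    rw [minStep_eq_iff]
    intro v
    have h2 := sameCount_eq_incCount (G := G) (treeColor hT vstar F) v
    have h3 := sameCount_add_diffCount (G := G) (treeColor hT vstar F) v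
    have h4 := hdeg v
    rw [monoEdges_treeColor hT vstar hFedge] at h2
    omega
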